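/- In the 3-dimensional algebra A of type 2A with basis a, b, c, the Killing form κ is not proportional to the natural form ν: there is no scalar t ∈ ℚ such that κ(x, y) = t·ν(x, y) for all x, y ∈ A. -/

import Mathlib

noncomputable section

/-- The underlying space of the dihedral algebra of type 2A: 3-dimensional over ℚ. -/
abbrev TwoA := Fin 3 → ℚ

/-- The basis vectors `a`, `b`, `c`. -/
def e (i : Fin 3) : TwoA := Pi.single i 1

/-- The index of the third basis vector, distinct from two distinct indices `i`, `j`. -/
def third (i j : Fin 3) : Fin 3 := ⟨(3 - i.val - j.val) % 3, Nat.mod_lt _ (by norm_num)⟩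

/-- Products of basis vectors: `p·p = p`, `p·q = (1/8)(p + q - r)`. -/
def mulB (i j : Fin 3) : TwoA :=
  if i = j then e i else (1 / 8 : ℚ) • (e i + e j - e (third i j))

/-- The bilinear multiplication of the type-2A algebra. -/
def mul2A (x y : TwoA) : TwoA :=
  ∑ i : Fin 3, ∑ j : Fin 3, (x i * y j) • mulB i j

/-- Left multiplication `ad(x) : y ↦ x·y` as a `ℚ`-linear map. -/
def ad (x : TwoA) : TwoA →ₗ[ℚ] TwoA where
  toFun y := mul2A x y
  map_add' y z := by
    simp only [mul2A, Pi.add_apply, mul_add, add_smul]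
    rw [← Finset.sum_add_distrib]
    refine Finset.sum_congr rfl fun i _ => ?_
    rw [← Finset.sum_add_distrib]
  map_smul' c y := by
    simp only [mul2A, Pi.smul_apply, smul_eq_mul, RingHom.id_apply, Finset.smul_sum]
    refine Finset.sum_congr rfl fun i _ => Finset.sum_congr rfl fun j _ => ?_
    rw [smul_smul]
    congr 1
    ring

/-- The Killing form `κ(x, y) = Trace(ad(x) ∘ ad(y))`. -/
def kappa (x y : TwoA) : ℚ := LinearMap.trace ℚ TwoA (ad x ∘ₗ ad y)

/-- The natural form: `ν(p, p) = 1`, `ν(p, q) = 1/8` on basis vectors. -/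
def nu (x y : TwoA) : ℚ :=
  ∑ i : Fin 3, ∑ j : Fin 3, x i * y j * (if i = j then 1 else 1 / 8)

lemma trace_eq (f : TwoA →ₗ[ℚ] TwoA) :
    LinearMap.trace ℚ TwoA f = ∑ i : Fin 3, f (Pi.single i 1) i := by
  rw [LinearMap.trace_eq_matrix_trace ℚ (Pi.basisFun ℚ (Fin 3)) f]
  simp [Matrix.trace, Matrix.diag, LinearMap.toMatrix_apply]

lemma kappa00 : kappa (e 0) (e 0) = 17/16 := by
  rw [kappa, trace_eq]
  simp only [LinearMap.comp_apply, ad, LinearMap.coe_mk, AddHom.coe_mk, mul2A, mulB, e, third]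
  norm_num +decide [Fin.sum_univ_three, Pi.single_apply]

lemma kappa01 : kappa (e 0) (e 1) = 1/4 := by
  rw [kappa, trace_eq]
  simp only [LinearMap.comp_apply, ad, LinearMap.coe_mk, AddHom.coe_mk, mul2A, mulB, e, third]
  norm_num +decide [Fin.sum_univ_three, Pi.single_apply]

lemma nu00 : nu (e 0) (e 0) = 1 := by
  norm_num +decide [nu, e, Fin.sum_univ_three, Pi.single_apply]

lemma nu01 : nu (e 0) (e 1) = 1/8 := by
  norm_num +decide [nu, e, Fin.sum_univ_three, Pi.single_apply]

/-- The Killing form `κ` of the type-2A algebra is not proportional to the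
natural form `ν`. -/
theorem kappa_not_proportional_nu :
    ¬ ∃ t : ℚ, ∀ x y : TwoA, kappa x y = t * nu x y := by
  rintro ⟨t, h⟩
  have h1 := h (e 0) (e 0)
  have h2 := h (e 0) (e 1)
  rw [kappa00, nu00] at h1
  rw [kappa01, nu01] at h2
  rw [mul_one] at h1
  rw [← h1] at h2
  norm_num at h2

end
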